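/- In the broadcast measure ν_h on the complete b-ary tree, condition on the spins (σ(u_1),…,σ(u_h)) along the path P from a fixed leaf û to the root. Then the events {R_σ(w) = 0}, as w ranges over all off-path children of path vertices, are mutually independent given the path spins; moreover if σ(u_i) = 0 then for each off-path child w of u_i, Pr[R_σ(w) = 0 | path spins] equals the probability that the bottom-up reconstruction rule outputs 0 on an independent broadcast tree of height i−1. Consequently, ν_h(A(σ)=1 and A(σ^û)=0) ≤ E_{σ∼ν_h}[ ∏_{i>0: σ(u_i)=0} g_{i−1}^{b−1} ], where g_j = Pr_{η∼ν_j}[A(η)=0] and σ^û flips σ at û. -/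

import Mathlib

open Finset

/-- Vertices of the complete `b`-ary tree of height `h`: a vertex at depth `k` is a
path of `k` child-indices from the root. -/
def Vtx (b h : ℕ) : Type := Σ k : Fin (h + 1), (Fin (k : ℕ) → Fin b)

noncomputable instance (b h : ℕ) : Fintype (Vtx b h) := by unfold Vtx; infer_instance
instance (b h : ℕ) : DecidableEq (Vtx b h) := by unfold Vtx; infer_instance

/-- Depth of a vertex. -/
def Vtx.depth {b h : ℕ} (v : Vtx b h) : ℕ := (v.1 : ℕ)

/-- The root. -/
def treeRoot (b h : ℕ) : Vtx b h :=
  ⟨⟨0, Nat.succ_pos h⟩, fun i => i.elim0⟩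

/-- Parent of a vertex (the root is its own parent). -/
def Vtx.parent {b h : ℕ} (v : Vtx b h) : Vtx b h :=
  ⟨⟨(v.1 : ℕ) - 1, lt_of_le_of_lt (Nat.sub_le _ _) v.1.isLt⟩,
    fun i => v.2 ⟨(i : ℕ), lt_of_lt_of_le i.isLt (Nat.sub_le _ _)⟩⟩

/-- The `j`-th child of a non-leaf vertex. -/
def Vtx.child {b h : ℕ} (v : Vtx b h) (hlt : (v.1 : ℕ) < h) (j : Fin b) : Vtx b h :=
  ⟨⟨(v.1 : ℕ) + 1, by omega⟩,
    fun i => if hi : (i : ℕ) < (v.1 : ℕ) then v.2 ⟨(i : ℕ), hi⟩ else j⟩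

/-- The vertex at depth `d` on the all-`0` path from the root to a fixed leaf. -/
def pathVtx (b h : ℕ) (hb : 0 < b) (d : Fin (h + 1)) : Vtx b h :=
  ⟨d, fun _ => ⟨0, hb⟩⟩

/-- The bottom-up reconstruction rule: a leaf is labeled by its spin; an internal vertex
is labeled occupied iff all its children are labeled unoccupied. -/
def Rfun {b h : ℕ} (σ : Vtx b h → Bool) (v : Vtx b h) : Bool :=
  if hk : (v.1 : ℕ) = h then σ v
  else decide (∀ j : Fin b,
    Rfun σ (v.child (lt_of_le_of_ne (Nat.lt_succ_iff.mp v.1.isLt) hk) j) = false)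
termination_by h - (v.1 : ℕ)
decreasing_by
  all_goals
    have hv := v.1.isLt
    show h - ((v.1 : ℕ) + 1) < h - (v.1 : ℕ)
    omega

/-- The broadcast measure `ν_h` on the complete `b`-ary tree. -/
noncomputable def bcast (b h : ℕ) (ω : ℝ) (σ : Vtx b h → Bool) : ℝ :=
  ∏ v : Vtx b h,
    if (v.1 : ℕ) = 0 then (if σ v then ω / (1 + ω) else 1 - ω / (1 + ω))
    else if σ v.parent then (if σ v then 0 else 1)
    else (if σ v then ω / (1 + ω) else 1 - ω / (1 + ω))

/-- `g_j = Pr_{η∼ν_j}[A(η)=0]`: the probability that the bottom-up reconstruction rule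
outputs `0` at the root of an independent broadcast tree of height `j`. -/
noncomputable def gval (b j : ℕ) (ω : ℝ) : ℝ :=
  ∑ η : Vtx b j → Bool,
    bcast b j ω η * (if Rfun η (treeRoot b j) = false then 1 else 0)

/-- The `j`-th child of the path vertex at depth `d` (off the path when `j ≠ 0`). -/
def offChild (b h : ℕ) (hb : 0 < b) (d : Fin h) (j : Fin b) : Vtx b h :=
  (pathVtx b h hb d.castSucc).child (by show ((d.castSucc : Fin (h+1)) : ℕ) < h; simp) j

namespace Stmt17

variable {b h : ℕ}

lemma vtx_ext {u v : Vtx b h} (h1 : (u.1 : ℕ) = (v.1 : ℕ))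
    (h2 : ∀ (i : ℕ) (hi : i < (u.1 : ℕ)), u.2 ⟨i, hi⟩ = v.2 ⟨i, h1 ▸ hi⟩) : u = v := by
  obtain ⟨k, f⟩ := u
  obtain ⟨k', g⟩ := v
  dsimp at h1 h2
  have hk : k = k' := Fin.ext h1
  subst hk
  have : f = g := funext fun i => h2 i.1 i.2
  rw [this]

lemma vtx_snd_congr {u v : Vtx b h} (H : u = v) (i : ℕ) (hi : i < (u.1 : ℕ))
    (hi' : i < (v.1 : ℕ)) : u.2 ⟨i, hi⟩ = v.2 ⟨i, hi'⟩ := by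
  subst H; rfl

/-- Embedding of the `j`-th principal subtree. -/
def iota (j : Fin b) (v : Vtx b h) : Vtx b (h + 1) :=
  ⟨⟨(v.1 : ℕ) + 1, by have := v.1.isLt; omega⟩,
    fun i => if hi : (i : ℕ) = 0 then j
      else v.2 ⟨(i : ℕ) - 1, by
        have hi2 : (i : ℕ) < (v.1 : ℕ) + 1 := i.isLt
        omega⟩⟩

lemma iota_fst (j : Fin b) (v : Vtx b h) : ((iota j v).1 : ℕ) = (v.1 : ℕ) + 1 := rfl

lemma iota_snd_zero (j : Fin b) (v : Vtx b h) (hi : 0 < ((iota j v).1 : ℕ)) :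
    (iota j v).2 ⟨0, hi⟩ = j := by
  unfold iota; dsimp only; rw [dif_pos]; rfl

lemma iota_snd_succ (j : Fin b) (v : Vtx b h) (i : ℕ) (hi : i + 1 < ((iota j v).1 : ℕ))
    (hi' : i < (v.1 : ℕ)) : (iota j v).2 ⟨i + 1, hi⟩ = v.2 ⟨i, hi'⟩ := by
  unfold iota; dsimp only
  rw [dif_neg (by simp)]
  congr 1

lemma eq_root {v : Vtx b h} (hv : (v.1 : ℕ) = 0) : v = treeRoot b h := by
  refine vtx_ext hv ?_
  intro i hi; omega

def vhead (v : Vtx b (h + 1)) (hv : (v.1 : ℕ) ≠ 0) : Fin b :=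
  v.2 ⟨0, Nat.pos_of_ne_zero hv⟩

def vtail (v : Vtx b (h + 1)) (hv : (v.1 : ℕ) ≠ 0) : Vtx b h :=
  ⟨⟨(v.1 : ℕ) - 1, by have := v.1.isLt; omega⟩,
    fun i => v.2 ⟨(i : ℕ) + 1, by
      have hi : (i : ℕ) < (v.1 : ℕ) - 1 := i.isLt
      have := v.1.isLt
      omega⟩⟩

lemma vtail_fst (v : Vtx b (h + 1)) (hv : (v.1 : ℕ) ≠ 0) :
    ((vtail v hv).1 : ℕ) = (v.1 : ℕ) - 1 := rfl

lemma iota_vtail (v : Vtx b (h + 1)) (hv : (v.1 : ℕ) ≠ 0) :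
    iota (vhead v hv) (vtail v hv) = v := by
  refine vtx_ext (by show (v.1 : ℕ) - 1 + 1 = (v.1 : ℕ); omega) ?_
  intro i hi
  have hi0 : i < (v.1 : ℕ) - 1 + 1 := hi
  match i, hi, hi0 with
  | 0, hi, hi0 => rw [iota_snd_zero]; rfl
  | (i + 1), hi, hi0 =>
      rw [iota_snd_succ (hi' := by show (i : ℕ) < (v.1 : ℕ) - 1; omega)]
      rfl

lemma vhead_iota (j : Fin b) (v : Vtx b h) (hv : ((iota j v).1 : ℕ) ≠ 0) :
    vhead (iota j v) hv = j := iota_snd_zero j v _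

lemma vtail_iota (j : Fin b) (v : Vtx b h) (hv : ((iota j v).1 : ℕ) ≠ 0) :
    vtail (iota j v) hv = v := by
  refine vtx_ext (by rw [vtail_fst, iota_fst]; omega) ?_
  intro i hi
  have hi' : i < (v.1 : ℕ) := by
    have h2 : i < ((iota j v).1 : ℕ) - 1 := hi
    rw [iota_fst] at h2; omega
  show (iota j v).2 ⟨i + 1, _⟩ = _
  rw [iota_snd_succ (hi' := hi')]

lemma iota_inj {j j' : Fin b} {u u' : Vtx b h} (H : iota j u = iota j' u') :
    j = j' ∧ u = u' := by
  have hfst : (u.1 : ℕ) = (u'.1 : ℕ) := by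
    have := congrArg (fun w : Vtx b (h+1) => (w.1 : ℕ)) H
    simpa [iota_fst] using this
  constructor
  · rw [← iota_snd_zero j u (by rw [iota_fst]; omega),
      ← iota_snd_zero j' u' (by rw [iota_fst]; omega)]
    exact vtx_snd_congr H 0 _ _
  · refine vtx_ext hfst ?_
    intro i hi
    rw [← iota_snd_succ j u i (by rw [iota_fst]; omega) hi,
      ← iota_snd_succ j' u' i (by rw [iota_fst]; omega) (by omega)]
    exact vtx_snd_congr H (i + 1) _ _

end Stmt17
namespace Stmt17

variable {b h : ℕ}

/-! ### glue -/

def glue (s : Bool) (η : Fin b → Vtx b h → Bool) : Vtx b (h + 1) → Bool :=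
  fun v => if hv : (v.1 : ℕ) = 0 then s else η (vhead v hv) (vtail v hv)

lemma root_fst (b h : ℕ) : ((treeRoot b h).1 : ℕ) = 0 := rfl

lemma glue_root (s : Bool) (η : Fin b → Vtx b h → Bool) :
    glue s η (treeRoot b (h + 1)) = s := by
  unfold glue; rw [dif_pos (root_fst b (h+1))]

lemma glue_iota (s : Bool) (η : Fin b → Vtx b h → Bool) (j : Fin b) (v : Vtx b h) :
    glue s η (iota j v) = η j v := by
  unfold glue
  rw [dif_neg (by rw [iota_fst]; omega)]
  rw [vhead_iota, vtail_iota]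

lemma glue_surj (σ : Vtx b (h + 1) → Bool) :
    glue (σ (treeRoot b (h + 1))) (fun j v => σ (iota j v)) = σ := by
  funext v
  by_cases hv : (v.1 : ℕ) = 0
  · unfold glue; rw [dif_pos hv]
    exact congrArg σ (eq_root hv).symm
  · unfold glue; rw [dif_neg hv]
    exact congrArg σ (iota_vtail v hv)

lemma sum_glue (g : (Vtx b (h + 1) → Bool) → ℝ) :
    ∑ σ : Vtx b (h + 1) → Bool, g σ =
      ∑ s : Bool, ∑ η : Fin b → Vtx b h → Bool, g (glue s η) := by
  have step1 : ∑ σ : Vtx b (h + 1) → Bool, g σ =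
      ∑ p : Bool × (Fin b → Vtx b h → Bool), g (glue p.1 p.2) := by
    refine (Fintype.sum_bijective
    (fun p : Bool × (Fin b → Vtx b h → Bool) => glue p.1 p.2) ⟨?_, ?_⟩ _ _
      (fun p => rfl)).symm
    · intro p q hpq
      have h1 : p.1 = q.1 := by
        have := congrFun hpq (treeRoot b (h + 1))
        simp only [] at this
        rwa [glue_root, glue_root] at this
      have h2 : p.2 = q.2 := by
        funext j v
        have := congrFun hpq (iota j v)
        simp only [] at this
        rwa [glue_iota, glue_iota] at this
      exact Prod.ext h1 h2
    · intro σ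
      exact ⟨(σ (treeRoot b (h + 1)), fun j v => σ (iota j v)), glue_surj σ⟩
  rw [step1, Fintype.sum_prod_type]

def vEquiv (b h : ℕ) : Unit ⊕ Fin b × Vtx b h ≃ Vtx b (h + 1) where
  toFun x := Sum.elim (fun _ => treeRoot b (h + 1)) (fun p => iota p.1 p.2) x
  invFun v := if hv : (v.1 : ℕ) = 0 then Sum.inl () else Sum.inr (vhead v hv, vtail v hv)
  left_inv x := by
    cases x with
    | inl u => dsimp; rw [dif_pos (root_fst b (h + 1))]
    | inr p =>
        dsimp
        rw [dif_neg (by rw [iota_fst]; omega)]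
        rw [vhead_iota, vtail_iota]
  right_inv v := by
    by_cases hv : (v.1 : ℕ) = 0
    · dsimp; rw [dif_pos hv]; exact (eq_root hv).symm
    · dsimp; rw [dif_neg hv]; exact iota_vtail v hv

lemma prod_vtx (f : Vtx b (h + 1) → ℝ) :
    ∏ v : Vtx b (h + 1), f v =
      f (treeRoot b (h + 1)) * ∏ j : Fin b, ∏ v : Vtx b h, f (iota j v) := by
  rw [← Equiv.prod_comp (vEquiv b h) f, Fintype.prod_sum_type]
  simp [vEquiv, Fintype.prod_prod_type]

/-! ### child and parent -/

lemma child_fst (v : Vtx b h) (hlt : (v.1 : ℕ) < h) (j : Fin b) :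
    ((v.child hlt j).1 : ℕ) = (v.1 : ℕ) + 1 := rfl

lemma child_snd_lt (v : Vtx b h) (hlt : (v.1 : ℕ) < h) (j : Fin b) (i : ℕ)
    (hi : i < ((v.child hlt j).1 : ℕ)) (hi' : i < (v.1 : ℕ)) :
    (v.child hlt j).2 ⟨i, hi⟩ = v.2 ⟨i, hi'⟩ := by
  unfold Vtx.child; dsimp only; rw [dif_pos hi']

lemma child_snd_ge (v : Vtx b h) (hlt : (v.1 : ℕ) < h) (j : Fin b) (i : ℕ)
    (hi : i < ((v.child hlt j).1 : ℕ)) (hi' : ¬ i < (v.1 : ℕ)) :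
    (v.child hlt j).2 ⟨i, hi⟩ = j := by
  unfold Vtx.child; dsimp only; rw [dif_neg hi']

lemma child_iota (v : Vtx b h) (j j' : Fin b) (hlt' : (v.1 : ℕ) < h)
    (hlt : (((iota j v).1 : ℕ)) < h + 1) :
    (iota j v).child hlt j' = iota j (v.child hlt' j') := by
  have hd : (((iota j v).child hlt j').1 : ℕ) = (v.1 : ℕ) + 2 := rfl
  refine vtx_ext (by rw [hd]; rfl) ?_
  intro i hi
  rw [hd] at hi
  match i, hi with
  | 0, hi =>
      rw [child_snd_lt (hi' := by rw [iota_fst]; omega), iota_snd_zero,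
        iota_snd_zero]
  | (i + 1), hi =>
      by_cases hc : i < (v.1 : ℕ)
      · rw [child_snd_lt (hi' := by rw [iota_fst]; omega),
          iota_snd_succ (hi' := hc),
          iota_snd_succ (hi' := by rw [child_fst]; omega),
          child_snd_lt (hi' := hc)]
      · rw [child_snd_ge (hi' := by rw [iota_fst]; omega),
          iota_snd_succ (hi' := by rw [child_fst]; omega),
          child_snd_ge (hi' := hc)]

lemma root_child (hb : 0 < b) (j : Fin b) (hlt : (((treeRoot b (h+1)).1 : ℕ)) < h + 1) :
    (treeRoot b (h + 1)).child hlt j = iota j (treeRoot b h) := by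
  refine vtx_ext (by rfl) ?_
  intro i hi
  have hi0 : i = 0 := by
    have : i < ((treeRoot b (h+1)).1 : ℕ) + 1 := hi
    rw [root_fst] at this; omega
  subst hi0
  rw [child_snd_ge (hi' := by rw [root_fst]; omega), iota_snd_zero]

lemma parent_iota_zero (j : Fin b) (v : Vtx b h) (hv : (v.1 : ℕ) = 0) :
    (iota j v).parent = treeRoot b (h + 1) := by
  apply eq_root
  show ((iota j v).1 : ℕ) - 1 = 0
  rw [iota_fst]; omega

lemma parent_fst (v : Vtx b h) : ((v.parent).1 : ℕ) = (v.1 : ℕ) - 1 := rfl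

lemma parent_snd (v : Vtx b h) (i : ℕ) (hi : i < ((v.parent).1 : ℕ))
    (hi' : i < (v.1 : ℕ)) : (v.parent).2 ⟨i, hi⟩ = v.2 ⟨i, hi'⟩ := rfl

lemma parent_iota (j : Fin b) (v : Vtx b h) (hv : (v.1 : ℕ) ≠ 0) :
    (iota j v).parent = iota j v.parent := by
  refine vtx_ext (by rw [parent_fst, iota_fst, iota_fst, parent_fst]; omega) ?_
  intro i hi
  have hi1 : i < (v.1 : ℕ) := by
    have : i < ((iota j v).1 : ℕ) - 1 := hi
    rw [iota_fst] at this; omega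
  rw [parent_snd (hi' := by rw [iota_fst]; omega)]
  match i, hi1 with
  | 0, hi1 => rw [iota_snd_zero, iota_snd_zero]
  | (i + 1), hi1 =>
      rw [iota_snd_succ (hi' := by omega),
        iota_snd_succ (hi' := by rw [parent_fst]; omega),
        parent_snd (hi' := by omega)]

/-! ### Rfun -/

lemma Rfun_leaf {σ : Vtx b h → Bool} {v : Vtx b h} (hv : (v.1 : ℕ) = h) :
    Rfun σ v = σ v := by
  rw [Rfun, dif_pos hv]

lemma Rfun_node {σ : Vtx b h → Bool} {v : Vtx b h} (hv : (v.1 : ℕ) ≠ h)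
    (hlt : (v.1 : ℕ) < h) :
    Rfun σ v = decide (∀ j : Fin b, Rfun σ (v.child hlt j) = false) := by
  rw [Rfun, dif_neg hv]

lemma Rfun_iota (σ : Vtx b (h + 1) → Bool) (j : Fin b) (v : Vtx b h) :
    Rfun σ (iota j v) = Rfun (fun u => σ (iota j u)) v := by
  suffices H : ∀ (n : ℕ) (v : Vtx b h), h - (v.1 : ℕ) ≤ n →
      Rfun σ (iota j v) = Rfun (fun u => σ (iota j u)) v by
    exact H h v (by omega)
  intro n
  induction n with
  | zero =>
      intro v hv
      have hl : (v.1 : ℕ) = h := by have := v.1.isLt; omega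
      rw [Rfun_leaf hl, Rfun_leaf (by rw [iota_fst]; omega)]
  | succ n ih =>
      intro v hv
      by_cases hl : (v.1 : ℕ) = h
      · rw [Rfun_leaf hl, Rfun_leaf (by rw [iota_fst]; omega)]
      · have hlt : (v.1 : ℕ) < h := lt_of_le_of_ne (Nat.lt_succ_iff.mp v.1.isLt) hl
        rw [Rfun_node (v := iota j v) (by rw [iota_fst]; omega)
            (by rw [iota_fst]; omega),
          Rfun_node hl hlt]
        rw [decide_eq_decide]
        apply forall_congr'
        intro j'
        rw [child_iota v j j' hlt, ih (v.child hlt j') (by rw [child_fst]; omega)]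

lemma Rfun_root_succ (hb : 0 < b) (σ : Vtx b (h + 1) → Bool) :
    Rfun σ (treeRoot b (h + 1)) =
      decide (∀ j : Fin b, Rfun (fun u => σ (iota j u)) (treeRoot b h) = false) := by
  rw [Rfun_node (by rw [root_fst]; omega) (by rw [root_fst]; omega)]
  rw [decide_eq_decide]
  apply forall_congr'
  intro j
  rw [root_child hb, Rfun_iota]

end Stmt17
namespace Stmt17

variable {b h : ℕ}

/-! ### conditional broadcast measure -/

noncomputable def wf (ω : ℝ) (p x : Bool) : ℝ :=
  if p then (if x then 0 else 1) else (if x then ω / (1 + ω) else 1 - ω / (1 + ω))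

noncomputable def cbcast (b h : ℕ) (ω : ℝ) (p : Bool) (σ : Vtx b h → Bool) : ℝ :=
  ∏ v : Vtx b h,
    if (v.1 : ℕ) = 0 then wf ω p (σ v) else wf ω (σ v.parent) (σ v)

lemma bcast_eq_cbcast (ω : ℝ) (σ : Vtx b h → Bool) :
    bcast b h ω σ = cbcast b h ω false σ := by
  unfold bcast cbcast wf
  apply Finset.prod_congr rfl
  intro v _
  by_cases hv : (v.1 : ℕ) = 0 <;> simp [hv]

lemma wf_total (ω : ℝ) (p : Bool) : wf ω p true + wf ω p false = 1 := by
  cases p <;> simp [wf]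

lemma wf_nonneg {ω : ℝ} (hω : 0 < ω) (p x : Bool) : 0 ≤ wf ω p x := by
  have h1 : 0 < 1 + ω := by linarith
  have h2 : ω / (1 + ω) ≤ 1 := by
    rw [div_le_one h1]; linarith
  have h3 : 0 ≤ ω / (1 + ω) := div_nonneg hω.le h1.le
  cases p <;> cases x <;> simp [wf] <;> linarith

instance : Unique (Vtx b 0) where
  default := treeRoot b 0
  uniq v := eq_root (by have := v.1.isLt; omega)

lemma cbcast_zero (ω : ℝ) (p : Bool) (σ : Vtx b 0 → Bool) :
    cbcast b 0 ω p σ = wf ω p (σ (treeRoot b 0)) := by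
  unfold cbcast
  rw [Fintype.prod_unique
    (f := fun v : Vtx b 0 => if (v.1 : ℕ) = 0 then wf ω p (σ v) else wf ω (σ v.parent) (σ v))]
  have hd : (default : Vtx b 0) = treeRoot b 0 := rfl
  rw [hd, if_pos (root_fst b 0)]

lemma sum_bool_fun (f : (Vtx b 0 → Bool) → ℝ) :
    ∑ σ : Vtx b 0 → Bool, f σ = ∑ x : Bool, f (fun _ => x) := by
  refine (Fintype.sum_bijective (fun x : Bool => (fun _ => x : Vtx b 0 → Bool)) ?_
    (fun x => f (fun _ => x)) f (fun x => rfl)).symm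
  · constructor
    · intro x y hxy
      have := congrFun hxy (treeRoot b 0)
      exact this
    · intro σ
      refine ⟨σ (treeRoot b 0), ?_⟩
      funext v
      rw [Unique.eq_default v]
      rfl

lemma cbcast_glue (ω : ℝ) (p s : Bool) (η : Fin b → Vtx b h → Bool) :
    cbcast b (h + 1) ω p (glue s η) =
      wf ω p s * ∏ j : Fin b, cbcast b h ω s (η j) := by
  unfold cbcast
  rw [prod_vtx]
  have h1 : (if ((treeRoot b (h + 1)).1 : ℕ) = 0
      then wf ω p (glue s η (treeRoot b (h + 1)))
      else wf ω (glue s η (treeRoot b (h + 1)).parent) (glue s η (treeRoot b (h + 1))))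
      = wf ω p s := by
    rw [if_pos (root_fst b (h + 1)), glue_root]
  rw [h1]
  congr 1
  apply Finset.prod_congr rfl
  intro j _
  apply Finset.prod_congr rfl
  intro v _
  rw [if_neg (by rw [iota_fst]; omega), glue_iota]
  by_cases hv : (v.1 : ℕ) = 0
  · rw [if_pos hv, parent_iota_zero j v hv, glue_root]
  · rw [if_neg hv, parent_iota j v hv, glue_iota]

lemma sum_pi_prod {X : Type*} [Fintype X] (T : Fin b → X → ℝ) :
    ∑ η : Fin b → X, ∏ j : Fin b, T j (η j) = ∏ j : Fin b, ∑ x : X, T j x := by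
  rw [Finset.prod_univ_sum, Fintype.piFinset_univ]

lemma cbcast_total (ω : ℝ) : ∀ (h : ℕ) (p : Bool),
    ∑ σ : Vtx b h → Bool, cbcast b h ω p σ = 1 := by
  intro h
  induction h with
  | zero =>
      intro p
      rw [sum_bool_fun (fun σ => cbcast b 0 ω p σ)]
      simp only [cbcast_zero]
      rw [Fintype.sum_bool]
      exact wf_total ω p
  | succ h ih =>
      intro p
      rw [sum_glue (fun σ => cbcast b (h + 1) ω p σ)]
      simp only [cbcast_glue]
      rw [Fintype.sum_bool]
      have hfac : ∀ s : Bool,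
          ∑ η : Fin b → Vtx b h → Bool, ∏ j : Fin b, cbcast b h ω s (η j) = 1 := by
        intro s
        rw [sum_pi_prod (fun j x => cbcast b h ω s x)]
        simp [ih s]
      rw [← Finset.mul_sum, ← Finset.mul_sum, hfac true, hfac false, mul_one, mul_one]
      exact wf_total ω p

end Stmt17
namespace Stmt17

variable {b h : ℕ}

/-! ### path vertices -/

lemma pathVtx_fst (hb : 0 < b) (d : Fin (h + 1)) :
    ((pathVtx b h hb d).1 : ℕ) = (d : ℕ) := rfl

lemma pathVtx_snd (hb : 0 < b) (d : Fin (h + 1)) (i : ℕ)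
    (hi : i < ((pathVtx b h hb d).1 : ℕ)) :
    (pathVtx b h hb d).2 ⟨i, hi⟩ = ⟨0, hb⟩ := rfl

lemma pathVtx_zero (hb : 0 < b) : pathVtx b h hb 0 = treeRoot b h :=
  eq_root (by rw [pathVtx_fst]; simp)

lemma pathVtx_succ (hb : 0 < b) (e : Fin (h + 1)) :
    pathVtx b (h + 1) hb e.succ = iota ⟨0, hb⟩ (pathVtx b h hb e) := by
  refine vtx_ext (by rw [pathVtx_fst, iota_fst, pathVtx_fst, Fin.val_succ]) ?_
  intro i hi
  have hi' : i < (e : ℕ) + 1 := by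
    rw [pathVtx_fst, Fin.val_succ] at hi; exact hi
  match i, hi, hi' with
  | 0, hi, hi' => rw [pathVtx_snd, iota_snd_zero]
  | (i + 1), hi, hi' =>
      rw [pathVtx_snd, iota_snd_succ (hi' := by rw [pathVtx_fst]; omega), pathVtx_snd]

lemma pathVtx_last_succ (hb : 0 < b) :
    pathVtx b (h + 1) hb (Fin.last (h + 1)) = iota ⟨0, hb⟩ (pathVtx b h hb (Fin.last h)) := by
  rw [← Fin.succ_last, pathVtx_succ]

lemma offChild_fst (hb : 0 < b) (d : Fin h) (j : Fin b) :
    ((offChild b h hb d j).1 : ℕ) = (d : ℕ) + 1 := rfl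

lemma offChild_snd_lt (hb : 0 < b) (d : Fin h) (j : Fin b) (i : ℕ)
    (hi : i < ((offChild b h hb d j).1 : ℕ)) (hi' : i < (d : ℕ)) :
    (offChild b h hb d j).2 ⟨i, hi⟩ = ⟨0, hb⟩ := by
  unfold offChild
  exact child_snd_lt _ _ _ _ hi (by rw [pathVtx_fst, Fin.coe_castSucc]; exact hi')

lemma offChild_snd_ge (hb : 0 < b) (d : Fin h) (j : Fin b) (i : ℕ)
    (hi : i < ((offChild b h hb d j).1 : ℕ)) (hi' : ¬ i < (d : ℕ)) :
    (offChild b h hb d j).2 ⟨i, hi⟩ = j := by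
  unfold offChild
  exact child_snd_ge _ _ _ _ hi (by rw [pathVtx_fst, Fin.coe_castSucc]; exact hi')

lemma offChild_zero (hb : 0 < b) (j : Fin b) (d0 : Fin (h + 1))
    (hd0 : (d0 : ℕ) = 0) : offChild b (h + 1) hb d0 j = iota j (treeRoot b h) := by
  refine vtx_ext ?_ ?_
  · rw [offChild_fst, iota_fst, root_fst, hd0]
  · intro i hi
    have hi' : i = 0 := by
      rw [offChild_fst] at hi; omega
    subst hi'
    rw [iota_snd_zero]
    exact offChild_snd_ge hb d0 j 0 hi (by omega)

lemma offChild_succ (hb : 0 < b) (d : Fin h) (j : Fin b) :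
    offChild b (h + 1) hb d.succ j = iota ⟨0, hb⟩ (offChild b h hb d j) := by
  refine vtx_ext ?_ ?_
  · rw [offChild_fst, iota_fst, offChild_fst]
    simp
  · intro i hi
    have hib : i < (d : ℕ) + 2 := by
      rw [offChild_fst] at hi; simp at hi; omega
    match i, hi, hib with
    | 0, hi, hib =>
        rw [iota_snd_zero]
        exact offChild_snd_lt hb d.succ j 0 hi (by simp)
    | (i + 1), hi, hib =>
        rw [iota_snd_succ (hi' := by rw [offChild_fst]; omega)]
        by_cases hc : i < (d : ℕ)
        · rw [offChild_snd_lt hb d.succ j (i+1) hi (by simp; omega),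
            offChild_snd_lt hb d j i _ hc]
        · rw [offChild_snd_ge hb d.succ j (i+1) hi (by simp; omega),
            offChild_snd_ge hb d j i _ hc]

/-! ### Gq and pathW -/

noncomputable def Gq (b m : ℕ) (ω : ℝ) (p : Bool) (F : Bool → ℝ) : ℝ :=
  ∑ η : Vtx b m → Bool, cbcast b m ω p η * F (Rfun η (treeRoot b m))

lemma Gq_one (m : ℕ) (ω : ℝ) (p : Bool) : Gq b m ω p (fun _ => 1) = 1 := by
  unfold Gq
  simp only [mul_one]
  exact cbcast_total ω m p

lemma Gq_gval (m : ℕ) (ω : ℝ) :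
    Gq b m ω false (fun r => if r = false then 1 else 0) = gval b m ω := by
  unfold Gq gval
  apply Finset.sum_congr rfl
  intro η _
  rw [bcast_eq_cbcast]

noncomputable def pathW (ω : ℝ) : (h : ℕ) → Bool → (Fin (h + 1) → Bool) → ℝ
  | 0, p, z => wf ω p (z 0)
  | (h + 1), p, z => wf ω p (z 0) * pathW ω h (z 0) (fun e => z e.succ)

/-! ### flip propagation -/

lemma flip_off (hb : 0 < b) : ∀ (h : ℕ) (σ σ' : Vtx b h → Bool),
    (∀ v, v ≠ pathVtx b h hb (Fin.last h) → σ v = σ' v) →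
    Rfun σ (treeRoot b h) ≠ Rfun σ' (treeRoot b h) →
    ∀ (d : Fin h) (j : Fin b), j ≠ ⟨0, hb⟩ → Rfun σ (offChild b h hb d j) = false := by
  intro h
  induction h with
  | zero => intro _ _ _ _ d; exact d.elim0
  | succ h ih =>
      intro σ σ' hagree hne d j hj
      have hagree' : ∀ j' : Fin b, j' ≠ ⟨0, hb⟩ →
          (fun u => σ (iota j' u)) = (fun u => σ' (iota j' u)) := by
        intro j' hj'
        funext u
        apply hagree
        intro hcon
        rw [pathVtx_last_succ] at hcon
        exact hj' (iota_inj hcon).1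
      have hA : ∀ j' : Fin b, j' ≠ ⟨0, hb⟩ →
          Rfun (fun u => σ (iota j' u)) (treeRoot b h) = false := by
        intro j' hj'
        by_contra hcon
        apply hne
        rw [Rfun_root_succ hb, Rfun_root_succ hb]
        have h1 : ¬ (∀ j'' : Fin b, Rfun (fun u => σ (iota j'' u)) (treeRoot b h) = false) :=
          fun hall => hcon (hall j')
        have h2 : ¬ (∀ j'' : Fin b, Rfun (fun u => σ' (iota j'' u)) (treeRoot b h) = false) := by
          intro hall
          apply hcon
          rw [hagree' j' hj']
          exact hall j'
        simp [h1, h2]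
      have hB : Rfun (fun u => σ (iota ⟨0, hb⟩ u)) (treeRoot b h) ≠
          Rfun (fun u => σ' (iota ⟨0, hb⟩ u)) (treeRoot b h) := by
        intro heq
        apply hne
        rw [Rfun_root_succ hb, Rfun_root_succ hb, decide_eq_decide]
        apply forall_congr'
        intro j''
        by_cases hj'' : j'' = ⟨0, hb⟩
        · subst hj''; rw [heq]
        · rw [hagree' j'' hj'']
      rcases Fin.eq_zero_or_eq_succ d with hd | ⟨d', hd⟩
      · subst hd
        rw [offChild_zero hb j _ (by simp), Rfun_iota]
        exact hA j hj
      · subst hd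
        rw [offChild_succ hb d' j, Rfun_iota]
        refine ih (fun u => σ (iota ⟨0, hb⟩ u)) (fun u => σ' (iota ⟨0, hb⟩ u)) ?_ hB d' j hj
        intro u hu
        apply hagree
        intro hcon
        rw [pathVtx_last_succ] at hcon
        exact hu (iota_inj hcon).2

end Stmt17
namespace Stmt17

variable {b : ℕ}

lemma master (hb : 0 < b) (ω : ℝ) : ∀ (h : ℕ) (p : Bool) (z : Fin (h + 1) → Bool)
    (F : Fin h → Fin b → Bool → ℝ),
    (∑ σ : Vtx b h → Bool,
        if ∀ e, σ (pathVtx b h hb e) = z e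
        then cbcast b h ω p σ *
          ∏ d : Fin h, ∏ j ∈ Finset.univ.erase ⟨0, hb⟩,
            F d j (Rfun σ (offChild b h hb d j))
        else 0)
    = pathW ω h p z *
        ∏ d : Fin h, ∏ j ∈ Finset.univ.erase ⟨0, hb⟩,
          Gq b (h - (d : ℕ) - 1) ω (z d.castSucc) (F d j) := by
  intro h
  induction h with
  | zero =>
      intro p z F
      have key : ∀ x : Bool,
          (if ∀ e, (fun _ : Vtx b 0 => x) (pathVtx b 0 hb e) = z e
            then cbcast b 0 ω p (fun _ => x) *
              ∏ d : Fin 0, ∏ j ∈ Finset.univ.erase ⟨0, hb⟩,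
                F d j (Rfun (fun _ => x) (offChild b 0 hb d j))
            else 0)
          = if x = z 0 then wf ω p x else 0 := by
        intro x
        have hiff : (∀ e, (fun _ : Vtx b 0 => x) (pathVtx b 0 hb e) = z e) ↔ x = z 0 := by
          constructor
          · intro H; exact H 0
          · intro H e
            have he : e = 0 := Fin.ext (by omega)
            rw [he]; exact H
        rw [if_congr hiff rfl rfl]
        by_cases hx : x = z 0
        · rw [if_pos hx, if_pos hx, cbcast_zero]
          simp
        · rw [if_neg hx, if_neg hx]
      rw [sum_bool_fun]
      simp only [key]
      rw [Fintype.sum_bool]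
      show _ = pathW ω 0 p z * _
      simp only [pathW]
      rw [Finset.univ_eq_empty (α := Fin 0), Finset.prod_empty, mul_one]
      by_cases hz : z 0 = true
      · rw [hz]; simp
      · rw [Bool.not_eq_true] at hz; rw [hz]; simp
  | succ h ih =>
      intro p z F
      set z' : Fin (h + 1) → Bool := fun e => z e.succ with hz'
      set F' : Fin h → Fin b → Bool → ℝ := fun d j => F d.succ j with hF'
      set T : Fin b → (Vtx b h → Bool) → ℝ := fun j x =>
        if j = ⟨0, hb⟩ then
          (if ∀ e, x (pathVtx b h hb e) = z' e
            then cbcast b h ω (z 0) x *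
              ∏ d : Fin h, ∏ j' ∈ Finset.univ.erase ⟨0, hb⟩,
                F' d j' (Rfun x (offChild b h hb d j'))
            else 0)
        else cbcast b h ω (z 0) x * F 0 j (Rfun x (treeRoot b h)) with hT
      have hT0' : ∀ x : Vtx b h → Bool, T ⟨0, hb⟩ x =
          (if ∀ e, x (pathVtx b h hb e) = z' e
            then cbcast b h ω (z 0) x *
              ∏ d : Fin h, ∏ j' ∈ Finset.univ.erase ⟨0, hb⟩,
                F' d j' (Rfun x (offChild b h hb d j'))
            else 0) := fun x => if_pos rfl
      have hTj' : ∀ j : Fin b, j ≠ ⟨0, hb⟩ → ∀ x : Vtx b h → Bool,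
          T j x = cbcast b h ω (z 0) x * F 0 j (Rfun x (treeRoot b h)) :=
        fun j hj x => if_neg hj
      have hroot : ∀ (s : Bool) (η : Fin b → Vtx b h → Bool),
          glue s η (pathVtx b (h + 1) hb 0) = s := by
        intro s η
        rw [pathVtx_zero, glue_root]
      have key : ∀ (s : Bool) (η : Fin b → Vtx b h → Bool),
          (if ∀ e, glue s η (pathVtx b (h + 1) hb e) = z e
            then cbcast b (h + 1) ω p (glue s η) *
              ∏ d : Fin (h + 1), ∏ j ∈ Finset.univ.erase ⟨0, hb⟩,
                F d j (Rfun (glue s η) (offChild b (h + 1) hb d j))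
            else 0)
          = if s = z 0 then wf ω p (z 0) * ∏ j : Fin b, T j (η j) else 0 := by
        intro s η
        by_cases hs : s = z 0
        · subst hs
          rw [if_pos rfl]
          have hcond : (∀ e, glue (z 0) η (pathVtx b (h + 1) hb e) = z e) ↔
              (∀ e, η ⟨0, hb⟩ (pathVtx b h hb e) = z' e) := by
            rw [Fin.forall_fin_succ]
            simp only [hroot (z 0) η, true_and]
            apply forall_congr'
            intro e
            rw [pathVtx_succ, glue_iota]
          rw [if_congr hcond rfl rfl]
          by_cases hP : ∀ e, η ⟨0, hb⟩ (pathVtx b h hb e) = z' e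
          · rw [if_pos hP]
            have hRzero : ∀ j : Fin b,
                Rfun (glue (z 0) η) (offChild b (h + 1) hb 0 j) = Rfun (η j) (treeRoot b h) := by
              intro j
              rw [offChild_zero hb j 0 (by simp), Rfun_iota]
              have hfun : (fun u => glue (z 0) η (iota j u)) = η j :=
                funext fun u => glue_iota _ _ _ _
              rw [hfun]
            have hRsucc : ∀ (d : Fin h) (j : Fin b),
                Rfun (glue (z 0) η) (offChild b (h + 1) hb d.succ j) =
                  Rfun (η ⟨0, hb⟩) (offChild b h hb d j) := by
              intro d j
              rw [offChild_succ hb d j, Rfun_iota]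
              have hfun : (fun u => glue (z 0) η (iota ⟨0, hb⟩ u)) = η ⟨0, hb⟩ :=
                funext fun u => glue_iota _ _ _ _
              rw [hfun]
            rw [cbcast_glue, Fin.prod_univ_succ]
            have e1 : (∏ j ∈ Finset.univ.erase ⟨0, hb⟩,
                F 0 j (Rfun (glue (z 0) η) (offChild b (h + 1) hb 0 j)))
                = ∏ j ∈ Finset.univ.erase ⟨0, hb⟩, F 0 j (Rfun (η j) (treeRoot b h)) := by
              apply Finset.prod_congr rfl
              intro j _
              rw [hRzero j]
            have e2 : (∏ d : Fin h, ∏ j ∈ Finset.univ.erase ⟨0, hb⟩,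
                F d.succ j (Rfun (glue (z 0) η) (offChild b (h + 1) hb d.succ j)))
                = ∏ d : Fin h, ∏ j ∈ Finset.univ.erase ⟨0, hb⟩,
                  F' d j (Rfun (η ⟨0, hb⟩) (offChild b h hb d j)) := by
              apply Finset.prod_congr rfl
              intro d _
              apply Finset.prod_congr rfl
              intro j _
              rw [hRsucc d j]
            rw [e1, e2]
            have e3 : (∏ j : Fin b, T j (η j))
                = T ⟨0, hb⟩ (η ⟨0, hb⟩) * ∏ j ∈ Finset.univ.erase ⟨0, hb⟩, T j (η j) :=
              (Finset.mul_prod_erase Finset.univ (fun j => T j (η j))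
                (Finset.mem_univ ⟨0, hb⟩)).symm
            have e4 : (∏ j : Fin b, cbcast b h ω (z 0) (η j))
                = cbcast b h ω (z 0) (η ⟨0, hb⟩) *
                  ∏ j ∈ Finset.univ.erase ⟨0, hb⟩, cbcast b h ω (z 0) (η j) :=
              (Finset.mul_prod_erase Finset.univ (fun j => cbcast b h ω (z 0) (η j))
                (Finset.mem_univ ⟨0, hb⟩)).symm
            have e5 : T ⟨0, hb⟩ (η ⟨0, hb⟩)
                = cbcast b h ω (z 0) (η ⟨0, hb⟩) *
                  ∏ d : Fin h, ∏ j' ∈ Finset.univ.erase ⟨0, hb⟩,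
                    F' d j' (Rfun (η ⟨0, hb⟩) (offChild b h hb d j')) := by
              rw [hT0' (η ⟨0, hb⟩), if_pos hP]
            have e6 : (∏ j ∈ Finset.univ.erase ⟨0, hb⟩, T j (η j))
                = ∏ j ∈ Finset.univ.erase ⟨0, hb⟩,
                  cbcast b h ω (z 0) (η j) * F 0 j (Rfun (η j) (treeRoot b h)) := by
              apply Finset.prod_congr rfl
              intro j hj
              rw [hTj' j (Finset.ne_of_mem_erase hj) (η j)]
            rw [e3, e5, e6, e4, Finset.prod_mul_distrib]
            ring
          · rw [if_neg hP]
            have : T ⟨0, hb⟩ (η ⟨0, hb⟩) = 0 := by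
              rw [hT0' (η ⟨0, hb⟩), if_neg hP]
            rw [Finset.prod_eq_zero (Finset.mem_univ ⟨0, hb⟩) this, mul_zero]
        · rw [if_neg hs, if_neg (fun hc => hs (by rw [← hroot s η]; exact hc 0))]
      rw [sum_glue]
      simp only [key]
      rw [Finset.sum_comm]
      simp only [Finset.sum_ite_eq', Finset.mem_univ, if_true]
      rw [← Finset.mul_sum, sum_pi_prod T]
      have hT0 : ∑ x : Vtx b h → Bool, T ⟨0, hb⟩ x
          = pathW ω h (z 0) z' *
            ∏ d : Fin h, ∏ j ∈ Finset.univ.erase ⟨0, hb⟩,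
              Gq b (h - (d : ℕ) - 1) ω (z' d.castSucc) (F' d j) := by
        rw [← ih (z 0) z' F']
        apply Finset.sum_congr rfl
        intro x _
        rw [hT0' x]
      have hTj : ∀ j ∈ Finset.univ.erase (⟨0, hb⟩ : Fin b),
          ∑ x : Vtx b h → Bool, T j x = Gq b h ω (z 0) (F 0 j) := by
        intro j hj
        unfold Gq
        apply Finset.sum_congr rfl
        intro x _
        rw [hTj' j (Finset.ne_of_mem_erase hj) x]
      rw [← Finset.mul_prod_erase Finset.univ (fun j => ∑ x : Vtx b h → Bool, T j x)
        (Finset.mem_univ ⟨0, hb⟩)]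
      rw [hT0, Finset.prod_congr rfl hTj]
      -- now the RHS side
      show _ = pathW ω (h + 1) p z * _
      simp only [pathW]
      rw [Fin.prod_univ_succ (f := fun d : Fin (h + 1) =>
        ∏ j ∈ Finset.univ.erase ⟨0, hb⟩,
          Gq b (h + 1 - (d : ℕ) - 1) ω (z d.castSucc) (F d j))]
      have e7 : (∏ j ∈ Finset.univ.erase (⟨0, hb⟩ : Fin b),
          Gq b (h + 1 - ((0 : Fin (h + 1)) : ℕ) - 1) ω (z (0 : Fin (h + 1)).castSucc) (F 0 j))
          = ∏ j ∈ Finset.univ.erase (⟨0, hb⟩ : Fin b), Gq b h ω (z 0) (F 0 j) := by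
      
        apply Finset.prod_congr rfl
        intro j _
        have hnat : h + 1 - ((0 : Fin (h + 1)) : ℕ) - 1 = h := by simp
        rw [hnat, Fin.castSucc_zero]
      have e8 : (∏ d : Fin h, ∏ j ∈ Finset.univ.erase (⟨0, hb⟩ : Fin b),
          Gq b (h + 1 - ((d.succ : Fin (h + 1)) : ℕ) - 1) ω (z d.succ.castSucc) (F d.succ j))
          = ∏ d : Fin h, ∏ j ∈ Finset.univ.erase (⟨0, hb⟩ : Fin b),
            Gq b (h - (d : ℕ) - 1) ω (z' d.castSucc) (F' d j) := by
        apply Finset.prod_congr rfl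
        intro d _
        apply Finset.prod_congr rfl
        intro j _
        have hnat : h + 1 - ((d.succ : Fin (h + 1)) : ℕ) - 1 = h - (d : ℕ) - 1 := by
          rw [Fin.val_succ]; omega
        rw [hnat, ← Fin.succ_castSucc]
      rw [e7, e8]
      ring

end Stmt17
namespace Stmt17

variable {b h : ℕ}

lemma cbcast_nonneg {ω : ℝ} (hω : 0 < ω) (p : Bool) (σ : Vtx b h → Bool) :
    0 ≤ cbcast b h ω p σ := by
  unfold cbcast
  apply Finset.prod_nonneg
  intro v _
  by_cases hv : (v.1 : ℕ) = 0
  · rw [if_pos hv]; exact wf_nonneg hω _ _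
  · rw [if_neg hv]; exact wf_nonneg hω _ _

lemma bcast_nonneg {ω : ℝ} (hω : 0 < ω) (σ : Vtx b h → Bool) :
    0 ≤ bcast b h ω σ := by
  rw [bcast_eq_cbcast]; exact cbcast_nonneg hω false σ

lemma card_erase (hb : 0 < b) :
    (Finset.univ.erase (⟨0, hb⟩ : Fin b)).card = b - 1 := by
  rw [Finset.card_erase_of_mem (Finset.mem_univ _), Finset.card_univ, Fintype.card_fin]

lemma fiber (hb : 0 < b) (f : (Vtx b h → Bool) → ℝ) :
    ∑ σ : Vtx b h → Bool, f σ =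
      ∑ z : Fin (h + 1) → Bool, ∑ σ : Vtx b h → Bool,
        if ∀ e, σ (pathVtx b h hb e) = z e then f σ else 0 := by
  rw [Finset.sum_comm]
  apply Finset.sum_congr rfl
  intro σ _
  have key : ∀ z : Fin (h + 1) → Bool,
      (if ∀ e, σ (pathVtx b h hb e) = z e then f σ else 0)
      = (if z = (fun e => σ (pathVtx b h hb e)) then f σ else 0) := by
    intro z
    refine if_congr ?_ rfl rfl
    constructor
    · intro H; funext e; exact (H e).symm
    · intro H e; rw [H]
  simp only [key]
  simp only [Finset.sum_ite_eq', Finset.mem_univ, if_true]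

/-- The total conditional mass of a path-spin pattern. -/
lemma sum_path (hb : 0 < b) (ω : ℝ) (z : Fin (h + 1) → Bool) :
    (∑ σ : Vtx b h → Bool,
      if ∀ e, σ (pathVtx b h hb e) = z e then bcast b h ω σ else 0)
    = pathW ω h false z := by
  have hm := master hb ω h false z (fun _ _ _ => (1 : ℝ))
  simp only [Gq_one, Finset.prod_const_one, mul_one] at hm
  rw [← hm]
  apply Finset.sum_congr rfl
  intro σ _
  rw [bcast_eq_cbcast]

end Stmt17

open Stmt17

/-- Path decomposition for the sensitivity of the bottom-up reconstruction rule `A`: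
conditioned on the path spins, for an off-path child `w` of an unoccupied path vertex
at depth `d`, the event `R_σ(w)=0` has conditional probability `g_{h−d−1}`; and
consequently `ν_h(A(σ)=1 ∧ A(σ^û)=0) ≤ E_{σ∼ν_h}[∏_{d: σ(u_d)=0} g_{h−d−1}^{b−1}]`,
where `û` is a fixed leaf and `u_d` the path vertex at depth `d`. -/
theorem stmt17 (b h : ℕ) (hb : 0 < b) (ω : ℝ) (hω : 0 < ω) :
    (∀ z : Fin (h + 1) → Bool, ∀ d : Fin h, ∀ j : Fin b, j ≠ ⟨0, hb⟩ →
      z d.castSucc = false →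
      (∑ σ : Vtx b h → Bool,
          if (∀ e, σ (pathVtx b h hb e) = z e) ∧
              Rfun σ (offChild b h hb d j) = false
          then bcast b h ω σ else 0) =
        (∑ σ : Vtx b h → Bool,
          if ∀ e, σ (pathVtx b h hb e) = z e then bcast b h ω σ else 0) *
          gval b (h - (d : ℕ) - 1) ω) ∧
    (∑ σ : Vtx b h → Bool,
        bcast b h ω σ *
          (if Rfun σ (treeRoot b h) = true ∧
              Rfun (Function.update σ (pathVtx b h hb (Fin.last h))
                (!σ (pathVtx b h hb (Fin.last h)))) (treeRoot b h) = false
           then 1 else 0)) ≤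
      ∑ σ : Vtx b h → Bool,
        bcast b h ω σ *
          ∏ d : Fin h,
            (if σ (pathVtx b h hb d.castSucc) = false
             then gval b (h - (d : ℕ) - 1) ω ^ (b - 1) else 1) := by
  constructor
  · -- Part 1
    intro z d j hj hz
    have hmem : j ∈ Finset.univ.erase (⟨0, hb⟩ : Fin b) :=
      Finset.mem_erase.2 ⟨hj, Finset.mem_univ j⟩
    set F1 : Fin h → Fin b → Bool → ℝ :=
      fun d' j' r => if d' = d ∧ j' = j then (if r = false then 1 else 0) else 1 with hF1
    have hF1dj : F1 d j = fun r => if r = false then (1 : ℝ) else 0 :=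
      funext fun r => if_pos ⟨rfl, rfl⟩
    have hF1off : ∀ (d' : Fin h) (j' : Fin b), ¬(d' = d ∧ j' = j) →
        F1 d' j' = fun _ => (1 : ℝ) :=
      fun d' j' hne => funext fun r => if_neg hne
    have lhs_eq : ∀ σ : Vtx b h → Bool,
        (if (∀ e, σ (pathVtx b h hb e) = z e) ∧
            Rfun σ (offChild b h hb d j) = false then bcast b h ω σ else 0)
        = (if ∀ e, σ (pathVtx b h hb e) = z e
            then cbcast b h ω false σ *
              ∏ d' : Fin h, ∏ j' ∈ Finset.univ.erase ⟨0, hb⟩,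
                F1 d' j' (Rfun σ (offChild b h hb d' j'))
            else 0) := by
      intro σ
      have hprod : (∏ d' : Fin h, ∏ j' ∈ Finset.univ.erase (⟨0, hb⟩ : Fin b),
          F1 d' j' (Rfun σ (offChild b h hb d' j')))
          = (if Rfun σ (offChild b h hb d j) = false then 1 else 0) := by
        rw [Fintype.prod_eq_single d (fun d' hne => Finset.prod_eq_one
          (fun j' _ => by rw [hF1off d' j' (fun hc => hne hc.1)]))]
        rw [Finset.prod_eq_single_of_mem j hmem
          (fun j' _ hne => by rw [hF1off d j' (fun hc => hne hc.2)])]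
        rw [hF1dj]
      rw [hprod]
      by_cases hc : ∀ e, σ (pathVtx b h hb e) = z e
      · rw [if_pos hc, bcast_eq_cbcast]
        by_cases hR : Rfun σ (offChild b h hb d j) = false
        · rw [if_pos ⟨hc, hR⟩, if_pos hR, mul_one]
        · rw [if_neg (fun hc2 => hR hc2.2), if_neg hR, mul_zero]
      · rw [if_neg (fun hc2 => hc hc2.1), if_neg hc]
    simp only [lhs_eq]
    rw [master hb ω h false z F1]
    rw [sum_path hb ω z]
    congr 1
    rw [Fintype.prod_eq_single d (fun d' hne => Finset.prod_eq_one
      (fun j' _ => by rw [hF1off d' j' (fun hc => hne hc.1), Gq_one]))]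
    rw [Finset.prod_eq_single_of_mem j hmem
      (fun j' _ hne => by rw [hF1off d j' (fun hc => hne hc.2), Gq_one])]
    rw [hF1dj, hz, Gq_gval]
  · -- Part 2
    set gpow : (Fin (h + 1) → Bool) → ℝ := fun z =>
      ∏ d : Fin h, (if z d.castSucc = false
        then gval b (h - (d : ℕ) - 1) ω ^ (b - 1) else 1) with hgpow
    have hptA : ∀ σ : Vtx b h → Bool,
        bcast b h ω σ * (if Rfun σ (treeRoot b h) = true ∧
            Rfun (Function.update σ (pathVtx b h hb (Fin.last h))
              (!σ (pathVtx b h hb (Fin.last h)))) (treeRoot b h) = false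
          then 1 else 0)
        ≤ bcast b h ω σ * ∏ d : Fin h, (if σ (pathVtx b h hb d.castSucc) = false
            then ∏ j ∈ Finset.univ.erase ⟨0, hb⟩,
              (if Rfun σ (offChild b h hb d j) = false then (1 : ℝ) else 0)
            else 1) := by
      intro σ
      apply mul_le_mul_of_nonneg_left _ (bcast_nonneg hω σ)
      by_cases hflip : Rfun σ (treeRoot b h) = true ∧
          Rfun (Function.update σ (pathVtx b h hb (Fin.last h))
            (!σ (pathVtx b h hb (Fin.last h)))) (treeRoot b h) = false
      · rw [if_pos hflip]
        have hagree : ∀ v, v ≠ pathVtx b h hb (Fin.last h) →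
            σ v = Function.update σ (pathVtx b h hb (Fin.last h))
              (!σ (pathVtx b h hb (Fin.last h))) v := by
          intro v hv
          rw [Function.update_of_ne hv]
        have hne : Rfun σ (treeRoot b h) ≠
            Rfun (Function.update σ (pathVtx b h hb (Fin.last h))
              (!σ (pathVtx b h hb (Fin.last h)))) (treeRoot b h) := by
          rw [hflip.1, hflip.2]; simp
        have hoff := flip_off hb h σ _ hagree hne
        have hone : (∏ d : Fin h, (if σ (pathVtx b h hb d.castSucc) = false
            then ∏ j ∈ Finset.univ.erase ⟨0, hb⟩,
              (if Rfun σ (offChild b h hb d j) = false then (1 : ℝ) else 0)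
            else 1)) = 1 := by
          apply Finset.prod_eq_one
          intro d _
          by_cases hσd : σ (pathVtx b h hb d.castSucc) = false
          · rw [if_pos hσd]
            apply Finset.prod_eq_one
            intro j hjm
            rw [if_pos (hoff d j (Finset.ne_of_mem_erase hjm))]
          · rw [if_neg hσd]
        rw [hone]
      · rw [if_neg hflip]
        apply Finset.prod_nonneg
        intro d _
        by_cases hσd : σ (pathVtx b h hb d.castSucc) = false
        · rw [if_pos hσd]
          apply Finset.prod_nonneg
          intro j _
          by_cases hR : Rfun σ (offChild b h hb d j) = false
          · rw [if_pos hR]; norm_num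
          · rw [if_neg hR]
        · rw [if_neg hσd]; norm_num
    refine le_trans (Finset.sum_le_sum (fun σ _ => hptA σ)) (le_of_eq ?_)
    have Mz : ∀ z : Fin (h + 1) → Bool,
        (∑ σ : Vtx b h → Bool,
          if ∀ e, σ (pathVtx b h hb e) = z e
          then bcast b h ω σ * ∏ d : Fin h, (if σ (pathVtx b h hb d.castSucc) = false
              then ∏ j ∈ Finset.univ.erase ⟨0, hb⟩,
                (if Rfun σ (offChild b h hb d j) = false then (1 : ℝ) else 0)
              else 1)
          else 0)
        = pathW ω h false z * gpow z := by
      intro z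
      set F2 : Fin h → Fin b → Bool → ℝ := fun d _ r =>
        if z d.castSucc = false then (if r = false then 1 else 0) else 1 with hF2
      have step : ∀ σ : Vtx b h → Bool,
          (if ∀ e, σ (pathVtx b h hb e) = z e
            then bcast b h ω σ * ∏ d : Fin h, (if σ (pathVtx b h hb d.castSucc) = false
                then ∏ j ∈ Finset.univ.erase ⟨0, hb⟩,
                  (if Rfun σ (offChild b h hb d j) = false then (1 : ℝ) else 0)
                else 1)
            else 0)
          = (if ∀ e, σ (pathVtx b h hb e) = z e
              then cbcast b h ω false σ *
                ∏ d : Fin h, ∏ j ∈ Finset.univ.erase ⟨0, hb⟩,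
                  F2 d j (Rfun σ (offChild b h hb d j))
              else 0) := by
        intro σ
        by_cases hc : ∀ e, σ (pathVtx b h hb e) = z e
        · rw [if_pos hc, if_pos hc, bcast_eq_cbcast]
          congr 1
          apply Finset.prod_congr rfl
          intro d _
          rw [hc d.castSucc]
          by_cases hzd : z d.castSucc = false
          · rw [if_pos hzd]
            apply Finset.prod_congr rfl
            intro j _
            simp only [hF2]
            rw [if_pos hzd]
          · rw [if_neg hzd]
            rw [Finset.prod_congr rfl (fun j _ => by simp only [hF2]; rw [if_neg hzd])]
            rw [Finset.prod_const_one]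
        · rw [if_neg hc, if_neg hc]
      simp only [step]
      rw [master hb ω h false z F2]
      congr 1
      rw [hgpow]
      apply Finset.prod_congr rfl
      intro d _
      by_cases hzd : z d.castSucc = false
      · have hF2d : ∀ j : Fin b, F2 d j = fun r => if r = false then (1 : ℝ) else 0 :=
          fun j => funext fun r => if_pos hzd
        rw [Finset.prod_congr rfl (fun j _ => by rw [hF2d j, hzd, Gq_gval])]
        rw [Finset.prod_const, card_erase hb, if_pos hzd]
      · have hF2d : ∀ j : Fin b, F2 d j = fun _ => (1 : ℝ) :=
          fun j => funext fun r => if_neg hzd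
        rw [Finset.prod_congr rfl (fun j _ => by rw [hF2d j, Gq_one])]
        rw [Finset.prod_const_one, if_neg hzd]
    have Rz : ∀ z : Fin (h + 1) → Bool,
        (∑ σ : Vtx b h → Bool,
          if ∀ e, σ (pathVtx b h hb e) = z e
          then bcast b h ω σ * ∏ d : Fin h, (if σ (pathVtx b h hb d.castSucc) = false
              then gval b (h - (d : ℕ) - 1) ω ^ (b - 1) else 1)
          else 0)
        = pathW ω h false z * gpow z := by
      intro z
      have step : ∀ σ : Vtx b h → Bool,
          (if ∀ e, σ (pathVtx b h hb e) = z e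
            then bcast b h ω σ * ∏ d : Fin h, (if σ (pathVtx b h hb d.castSucc) = false
                then gval b (h - (d : ℕ) - 1) ω ^ (b - 1) else 1)
            else 0)
          = gpow z * (if ∀ e, σ (pathVtx b h hb e) = z e then bcast b h ω σ else 0) := by
        intro σ
        by_cases hc : ∀ e, σ (pathVtx b h hb e) = z e
        · rw [if_pos hc, if_pos hc]
          rw [Finset.prod_congr rfl (fun d _ => by rw [hc d.castSucc])]
          rw [hgpow]
          ring
        · rw [if_neg hc, if_neg hc, mul_zero]
      simp only [step]
      rw [← Finset.mul_sum, sum_path hb ω z]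
      ring
    calc (∑ σ : Vtx b h → Bool,
        bcast b h ω σ * ∏ d : Fin h, (if σ (pathVtx b h hb d.castSucc) = false
            then ∏ j ∈ Finset.univ.erase ⟨0, hb⟩,
              (if Rfun σ (offChild b h hb d j) = false then (1 : ℝ) else 0)
            else 1))
        = ∑ z : Fin (h + 1) → Bool, ∑ σ : Vtx b h → Bool,
            (if ∀ e, σ (pathVtx b h hb e) = z e
              then bcast b h ω σ * ∏ d : Fin h, (if σ (pathVtx b h hb d.castSucc) = false
                  then ∏ j ∈ Finset.univ.erase ⟨0, hb⟩,
                    (if Rfun σ (offChild b h hb d j) = false then (1 : ℝ) else 0)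
                  else 1)
              else 0) := fiber hb _
      _ = ∑ z : Fin (h + 1) → Bool, pathW ω h false z * gpow z :=
          Finset.sum_congr rfl (fun z _ => Mz z)
      _ = ∑ z : Fin (h + 1) → Bool, ∑ σ : Vtx b h → Bool,
            (if ∀ e, σ (pathVtx b h hb e) = z e
              then bcast b h ω σ * ∏ d : Fin h, (if σ (pathVtx b h hb d.castSucc) = false
                  then gval b (h - (d : ℕ) - 1) ω ^ (b - 1) else 1)
              else 0) :=
          (Finset.sum_congr rfl (fun z _ => Rz z)).symm
      _ = ∑ σ : Vtx b h → Bool,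
            bcast b h ω σ * ∏ d : Fin h, (if σ (pathVtx b h hb d.castSucc) = false
                then gval b (h - (d : ℕ) - 1) ω ^ (b - 1) else 1) :=
          (fiber hb _).symm
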